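/- Let P ∈ ℝⁿˣⁿ be symmetric positive semidefinite, q ∈ range(P), s ∈ ℝ, and F(x) = xᵀPx/2 + qᵀx + s. Then for any level value ľ ∈ ℝ, a vector x ∈ range(P) satisfies F(x) = ľ if and only if qᵀP†q − 2s + 2ľ ≥ 0 and x = −P†q + √(qᵀP†q − 2s + 2ľ)·P^{†/2}ρ for some ρ ∈ range(P) with ‖ρ‖ = 1 (or x = −P†q if the square-root term is zero). -/

import Mathlib

open Matrix

/-- The four Penrose conditions characterizing the Moore–Penrose pseudoinverse. -/
def IsMoorePenroseInv {m n : ℕ} (A : Matrix (Fin m) (Fin n) ℝ)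
    (Ad : Matrix (Fin n) (Fin m) ℝ) : Prop :=
  A * Ad * A = A ∧ Ad * A * Ad = Ad ∧ (A * Ad)ᵀ = A * Ad ∧ (Ad * A)ᵀ = Ad * A

/-- Helper: symmetric matrices can be moved across a dot product. -/
lemma symm_dot_aux {n : ℕ} (M : Matrix (Fin n) (Fin n) ℝ) (hM : Mᵀ = M)
    (a b : Fin n → ℝ) : a ⬝ᵥ M.mulVec b = M.mulVec a ⬝ᵥ b := by
  rw [dotProduct_mulVec, ← vecMul_transpose, hM]

/-- level sets of the extended QP (variable constrained to range(P)).
`Pd = P†` and `Sh = P^{†/2}` (the positive semidefinite square root of `P†`). -/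
theorem extended_qp_level_sets {n : ℕ} (P Pd Sh : Matrix (Fin n) (Fin n) ℝ)
    (hP : P.PosSemidef) (hPd : IsMoorePenroseInv P Pd) (hSh : Sh.PosSemidef)
    (hShPd : Sh * Sh = Pd) (q : Fin n → ℝ) (hq : ∃ y : Fin n → ℝ, P.mulVec y = q)
    (s l : ℝ) (x : Fin n → ℝ) (hx : ∃ y : Fin n → ℝ, P.mulVec y = x) :
    x ⬝ᵥ P.mulVec x / 2 + q ⬝ᵥ x + s = l ↔
      (q ⬝ᵥ Pd.mulVec q - 2 * s + 2 * l ≥ 0 ∧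
        ((∃ ρ : Fin n → ℝ, (∃ y : Fin n → ℝ, P.mulVec y = ρ) ∧
            Real.sqrt (ρ ⬝ᵥ ρ) = 1 ∧
            x = -(Pd.mulVec q) +
              Real.sqrt (q ⬝ᵥ Pd.mulVec q - 2 * s + 2 * l) • Sh.mulVec ρ) ∨
          (Real.sqrt (q ⬝ᵥ Pd.mulVec q - 2 * s + 2 * l) = 0 ∧ x = -(Pd.mulVec q)))) := by
  obtain ⟨h1, h2, h3, h4⟩ := hPd
  have hPsym : Pᵀ = P := hP.1.eq
  have hShsym : Shᵀ = Sh := hSh.1.eq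
  -- symmetry of Pd (uniqueness of the Moore–Penrose inverse)
  have h3' : P * Pdᵀ = Pd * P := by
    calc P * Pdᵀ = Pᵀ * Pdᵀ := by rw [hPsym]
      _ = (Pd * P)ᵀ := (transpose_mul Pd P).symm
      _ = Pd * P := h4
  have h3'' : Pdᵀ * P = P * Pd := by
    calc Pdᵀ * P = Pdᵀ * Pᵀ := by rw [hPsym]
      _ = (P * Pd)ᵀ := (transpose_mul P Pd).symm
      _ = P * Pd := h3
  have hB : Pd = Pd * Pdᵀ * P := by
    calc Pd = Pd * P * Pd := h2.symm
      _ = Pd * (P * Pd) := by rw [Matrix.mul_assoc]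
      _ = Pd * (Pdᵀ * P) := by rw [h3'']
      _ = Pd * Pdᵀ * P := by rw [Matrix.mul_assoc]
  have hC : Pd = Pd * (Pd * P) := by
    calc Pd = Pd * Pdᵀ * P := hB
      _ = Pd * Pdᵀ * (P * Pd * P) := by rw [h1]
      _ = (Pd * Pdᵀ * P) * (Pd * P) := by noncomm_ring
      _ = Pd * (Pd * P) := by rw [← hB]
  have hD : Pd = Pd * P * Pdᵀ := by
    calc Pd = Pd * (Pd * P) := hC
      _ = Pd * (P * Pdᵀ) := by rw [h3']
      _ = Pd * P * Pdᵀ := by rw [Matrix.mul_assoc]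
  have hPdsym : Pdᵀ = Pd := by
    calc Pdᵀ = (Pd * P * Pdᵀ)ᵀ := by rw [← hD]
      _ = Pdᵀᵀ * (Pd * P)ᵀ := by rw [transpose_mul]
      _ = Pd * (Pd * P) := by rw [transpose_transpose, h4]
      _ = Pd := hC.symm
  have hcomm : Pd * P = P * Pd := by
    calc Pd * P = (Pd * P)ᵀ := h4.symm
      _ = Pᵀ * Pdᵀ := transpose_mul Pd P
      _ = P * Pd := by rw [hPsym, hPdsym]
  have hQP : (P * Pd) * P = P := h1
  have hPdQ : Pd * (P * Pd) = Pd := by rw [← Matrix.mul_assoc]; exact h2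
  have hQPd : (P * Pd) * Pd = Pd := by
    rw [← hcomm]; exact h2
  have hQsym : (P * Pd)ᵀ = P * Pd := h3
  -- (P * Pd) * Sh = Sh
  have hQSh : (P * Pd) * Sh = Sh := by
    have hM : (Sh - (P * Pd) * Sh) * (Sh - (P * Pd) * Sh)ᵀ = 0 := by
      have ht : (Sh - (P * Pd) * Sh)ᵀ = Sh - Sh * (P * Pd) := by
        rw [transpose_sub, transpose_mul, hShsym, hQsym]
      rw [ht]
      calc (Sh - (P * Pd) * Sh) * (Sh - Sh * (P * Pd))
          = Sh * Sh - (Sh * Sh) * (P * Pd) - (P * Pd) * (Sh * Sh)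
              + (P * Pd) * ((Sh * Sh) * (P * Pd)) := by noncomm_ring
        _ = Pd - Pd * (P * Pd) - (P * Pd) * Pd + (P * Pd) * (Pd * (P * Pd)) := by rw [hShPd]
        _ = Pd - Pd - Pd + Pd := by rw [hPdQ, hQPd]
        _ = 0 := by abel
    have h0 : Sh - (P * Pd) * Sh = 0 :=
      Matrix.self_mul_conjTranspose_eq_zero.mp (by simpa using hM)
    exact (sub_eq_zero.mp h0).symm
  have hShQ : Sh * (P * Pd) = Sh := by
    calc Sh * (P * Pd) = Shᵀ * (P * Pd)ᵀ := by rw [hShsym, hQsym]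
      _ = ((P * Pd) * Sh)ᵀ := (transpose_mul (P * Pd) Sh).symm
      _ = Sh := by rw [hQSh, hShsym]
  -- Sh * P * Sh = P * Pd
  have hT : Sh * P * Sh = P * Pd := by
    have hTSh : (Sh * P * Sh) * Sh = Sh := by
      calc (Sh * P * Sh) * Sh = Sh * P * (Sh * Sh) := by noncomm_ring
        _ = Sh * (P * Pd) := by rw [hShPd, Matrix.mul_assoc]
        _ = Sh := hShQ
    have hTPd : (Sh * P * Sh) * Pd = Pd := by
      calc (Sh * P * Sh) * Pd = (Sh * P * Sh) * (Sh * Sh) := by rw [hShPd]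
        _ = ((Sh * P * Sh) * Sh) * Sh := by noncomm_ring
        _ = Sh * Sh := by rw [hTSh]
        _ = Pd := hShPd
    have hTQ1 : (Sh * P * Sh) * (P * Pd) = Sh * P * Sh := by
      calc (Sh * P * Sh) * (P * Pd) = Sh * P * (Sh * (P * Pd)) := by noncomm_ring
        _ = Sh * P * Sh := by rw [hShQ]
    have hTQ2 : (Sh * P * Sh) * (P * Pd) = P * Pd := by
      calc (Sh * P * Sh) * (P * Pd) = (Sh * P * Sh) * (Pd * P) := by rw [hcomm]
        _ = ((Sh * P * Sh) * Pd) * P := by noncomm_ring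
        _ = Pd * P := by rw [hTPd]
        _ = P * Pd := hcomm
    exact hTQ1.symm.trans hTQ2
  -- Vector-level facts
  obtain ⟨yx, hyx⟩ := hx
  obtain ⟨yq, hyq⟩ := hq
  have hQx : (P * Pd).mulVec x = x := by
    rw [← hyx, mulVec_mulVec, hQP]
  have hPq : P.mulVec (Pd.mulVec q) = q := by
    rw [← hyq, mulVec_mulVec, mulVec_mulVec, h1]
  have hQd : (P * Pd).mulVec (Pd.mulVec q) = Pd.mulVec q := by
    rw [mulVec_mulVec, hQPd]
  set c : ℝ := q ⬝ᵥ Pd.mulVec q - 2 * s + 2 * l with hcdef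
  set u : Fin n → ℝ := x + Pd.mulVec q with hudef
  have hQu : (P * Pd).mulVec u = u := by
    rw [hudef, mulVec_add, hQx, hQd]
  -- key algebraic identity (completing the square)
  have hxq : x ⬝ᵥ P.mulVec (Pd.mulVec q) = q ⬝ᵥ x := by
    rw [hPq]; exact dotProduct_comm x q
  have hdx : Pd.mulVec q ⬝ᵥ P.mulVec x = q ⬝ᵥ x := by
    rw [symm_dot_aux P hPsym, hPq]
  have hdd : Pd.mulVec q ⬝ᵥ P.mulVec (Pd.mulVec q) = q ⬝ᵥ Pd.mulVec q := by
    rw [hPq]; exact dotProduct_comm _ q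
  have key : u ⬝ᵥ P.mulVec u = x ⬝ᵥ P.mulVec x + 2 * (q ⬝ᵥ x) + q ⬝ᵥ Pd.mulVec q := by
    rw [hudef, mulVec_add, add_dotProduct, dotProduct_add, dotProduct_add, hxq, hdx, hdd]
    ring
  have equiv1 : (x ⬝ᵥ P.mulVec x / 2 + q ⬝ᵥ x + s = l) ↔ u ⬝ᵥ P.mulVec u = c := by
    rw [key, hcdef]; constructor <;> intro h <;> linarith
  -- squared-norm computation: (Sh (P v)) ⬝ (Sh (P v)) = v ⬝ P v when (P Pd) v = v
  have hww : ∀ v : Fin n → ℝ, (P * Pd).mulVec v = v →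
      Sh.mulVec (P.mulVec v) ⬝ᵥ Sh.mulVec (P.mulVec v) = v ⬝ᵥ P.mulVec v := by
    intro v hv
    calc Sh.mulVec (P.mulVec v) ⬝ᵥ Sh.mulVec (P.mulVec v)
        = P.mulVec v ⬝ᵥ Sh.mulVec (Sh.mulVec (P.mulVec v)) := by
          exact (symm_dot_aux Sh hShsym (P.mulVec v) (Sh.mulVec (P.mulVec v))).symm
      _ = v ⬝ᵥ P.mulVec v := by
          rw [mulVec_mulVec, hShPd, mulVec_mulVec, hcomm, hv]
          exact (symm_dot_aux P hPsym v v).symm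
  rw [equiv1]
  constructor
  · -- forward direction
    intro hul
    have hc0 : (0:ℝ) ≤ c := by rw [← hul]; simpa using hP.dotProduct_mulVec_nonneg u
    refine ⟨hc0, ?_⟩
    rcases eq_or_lt_of_le hc0 with hc | hc
    · -- c = 0 : the center point
      right
      have hw0 : Sh.mulVec (P.mulVec u) = 0 := by
        apply dotProduct_self_eq_zero.mp
        rw [hww u hQu, hul]; exact hc.symm
      have hkey : Sh.mulVec (Sh.mulVec (P.mulVec u)) = u := by
        rw [mulVec_mulVec, hShPd, mulVec_mulVec, hcomm]; exact hQu
      have hu0 : u = 0 := by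
        rw [← hkey, hw0, mulVec_zero]
      constructor
      · rw [← hc, Real.sqrt_zero]
      · rw [hudef] at hu0
        exact eq_neg_of_add_eq_zero_left hu0
    · -- c > 0 : the sphere point
      left
      have hsc : (0:ℝ) < Real.sqrt c := Real.sqrt_pos.mpr hc
      have hne : Real.sqrt c ≠ 0 := ne_of_gt hsc
      refine ⟨(Real.sqrt c)⁻¹ • Sh.mulVec (P.mulVec u), ?_, ?_, ?_⟩
      · refine ⟨(Real.sqrt c)⁻¹ • (Pd * Sh).mulVec (P.mulVec u), ?_⟩
        rw [mulVec_smul]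
        congr 1
        rw [mulVec_mulVec, ← Matrix.mul_assoc, hQSh]
      · have hρρ : ((Real.sqrt c)⁻¹ • Sh.mulVec (P.mulVec u)) ⬝ᵥ
            ((Real.sqrt c)⁻¹ • Sh.mulVec (P.mulVec u)) = 1 := by
          rw [smul_dotProduct, dotProduct_smul, hww u hQu, hul, smul_eq_mul, smul_eq_mul,
            ← Real.mul_self_sqrt hc0]
          field_simp
          rw [Real.sqrt_sq hsc.le]
        rw [hρρ, Real.sqrt_one]
      · have hShρ : Sh.mulVec ((Real.sqrt c)⁻¹ • Sh.mulVec (P.mulVec u)) =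
            (Real.sqrt c)⁻¹ • u := by
          rw [mulVec_smul]
          congr 1
          rw [mulVec_mulVec, hShPd, mulVec_mulVec, hcomm]
          exact hQu
        rw [hShρ, smul_smul, mul_inv_cancel₀ hne, one_smul, hudef]
        abel
  · -- backward direction
    rintro ⟨hc0, hcase | hcase⟩
    · obtain ⟨ρ, ⟨yρ, hyρ⟩, hρ1, hxeq⟩ := hcase
      have hQρ : (P * Pd).mulVec ρ = ρ := by
        rw [← hyρ, mulVec_mulVec, hQP]
      have hρρ : ρ ⬝ᵥ ρ = 1 := by
        have hnn : (0:ℝ) ≤ ρ ⬝ᵥ ρ := by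
          simpa using dotProduct_self_star_nonneg ρ
        have h := Real.sq_sqrt hnn
        rw [hρ1] at h
        simpa using h.symm
      have hueq : u = Real.sqrt c • Sh.mulVec ρ := by
        rw [hudef, hxeq]; abel
      rw [hueq]
      calc (Real.sqrt c • Sh.mulVec ρ) ⬝ᵥ P.mulVec (Real.sqrt c • Sh.mulVec ρ)
          = Real.sqrt c * (Real.sqrt c * (Sh.mulVec ρ ⬝ᵥ P.mulVec (Sh.mulVec ρ))) := by
            rw [mulVec_smul, smul_dotProduct, dotProduct_smul, smul_eq_mul, smul_eq_mul]
        _ = Real.sqrt c * (Real.sqrt c * (ρ ⬝ᵥ ρ)) := by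
            rw [← symm_dot_aux Sh hShsym, mulVec_mulVec, mulVec_mulVec, hT, hQρ]
        _ = c := by rw [hρρ, mul_one, Real.mul_self_sqrt hc0]
    · obtain ⟨hsq, hxeq⟩ := hcase
      have hceq : c = 0 := (Real.sqrt_eq_zero hc0).mp hsq
      have hu0 : u = 0 := by rw [hudef, hxeq]; abel
      rw [hu0, hceq, mulVec_zero, dotProduct_zero]
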